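/- Let q = (q_n)_{n=0}^∞ be a bounded sequence of positive integers, let c^{(n)} = (c^{(n)}_0,…,c^{(n)}_{q_n}) be positive integers with c^{(n)}_0 = c^{(n)}_{q_n} = d_res, let W^{(n)}_m ∈ ℝ^{c^{(n)}_m × c^{(n)}_{m−1}} and b^{(n)}_m ∈ ℝ^{c^{(n)}_m}. If ∑_{k=0}^∞ ∏_{m=1}^{q_k} ‖W^{(k)}_m‖ < +∞ and ∑_{k=0}^∞ ∑_{m=1}^{q_k} (∏_{m'=m+1}^{q_k} ‖W^{(k)}_{m'}‖) ‖b^{(k)}_m‖ < +∞, then the sequence of networks 𝒩_{c,q,n} converges pointwise on [0,1]^{d_res} as n → ∞. -/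

import Mathlib

open Filter Matrix Topology
open scoped ENNReal

noncomputable section

/-- The ReLU activation applied componentwise. -/
def relu {d : ℕ} (x : Fin d → ℝ) : Fin d → ℝ := fun i => max (x i) 0

/-- Cast a vector along an equality of dimensions. -/
def castVec {a b : ℕ} (h : a = b) (v : Fin a → ℝ) : Fin b → ℝ := fun i => v (Fin.cast h.symm i)

/-- Cast a matrix along equalities of its dimensions. -/
def mcast {a a' b b' : ℕ} (ha : a = a') (hb : b = b') (M : Matrix (Fin a) (Fin b) ℝ) :
    Matrix (Fin a') (Fin b') ℝ :=
  M.submatrix (Fin.cast ha.symm) (Fin.cast hb.symm)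

/-- Outputs of consecutive fully connected ReLU layers:
`hiddenSeq c W b m x = (σ(W m ⬝ · + b m) ∘ ⋯ ∘ σ(W 1 ⬝ · + b 1)) x` (0-based weight indices). -/
def hiddenSeq (c : ℕ → ℕ) (W : ∀ m, Matrix (Fin (c (m+1))) (Fin (c m)) ℝ)
    (b : ∀ m, Fin (c (m+1)) → ℝ) : (m : ℕ) → (Fin (c 0) → ℝ) → Fin (c m) → ℝ
  | 0 => fun x => x
  | m+1 => fun x => relu ((W m).mulVec (hiddenSeq c W b m x) + b m)

/-- A residual block with `q` layers (`q ≥ 1`), shortcut connection added before the last ReLU. -/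
def resBlock (d q : ℕ) (hq : 0 < q) (c : ℕ → ℕ) (hc0 : c 0 = d) (hcq : c q = d)
    (W : ∀ m, Matrix (Fin (c (m+1))) (Fin (c m)) ℝ)
    (b : ∀ m, Fin (c (m+1)) → ℝ) (x : Fin d → ℝ) : Fin d → ℝ :=
  castVec (show c (q-1+1) = d from (congrArg c (Nat.succ_pred_eq_of_pos hq)).trans hcq)
    (relu ((W (q-1)).mulVec (hiddenSeq c W b (q-1) (castVec hc0.symm x))
      + castVec (show c (q-1+1) = d from
          (congrArg c (Nat.succ_pred_eq_of_pos hq)).trans hcq).symm x + b (q-1)))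

/-- The deep network with shortcut connections: composition of residual blocks `0,…,n`. -/
def resNet (d : ℕ) (q : ℕ → ℕ) (hq : ∀ n, 0 < q n) (c : ℕ → ℕ → ℕ)
    (hc0 : ∀ n, c n 0 = d) (hcq : ∀ n, c n (q n) = d)
    (W : ∀ n m, Matrix (Fin (c n (m+1))) (Fin (c n m)) ℝ)
    (b : ∀ n m, Fin (c n (m+1)) → ℝ) :
    ℕ → (Fin d → ℝ) → Fin d → ℝ
  | 0 => resBlock d (q 0) (hq 0) (c 0) (hc0 0) (hcq 0) (W 0) (b 0)
  | n+1 => fun x => resBlock d (q (n+1)) (hq (n+1)) (c (n+1)) (hc0 (n+1)) (hcq (n+1))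
      (W (n+1)) (b (n+1)) (resNet d q hq c hc0 hcq W b n x)

/-- `J` is a 0/1 diagonal (activation) matrix. -/
def IsActivation {a : ℕ} (J : Matrix (Fin a) (Fin a) ℝ) : Prop :=
  (∀ i, J i i = 0 ∨ J i i = 1) ∧ ∀ i j, i ≠ j → J i j = 0

/-- The pre-activation vector `z` has exactly the sign pattern prescribed by the
activation matrix `J`: positive on the support of `J` and `≤ 0` off it. -/
def inPattern {a : ℕ} (J : Matrix (Fin a) (Fin a) ℝ) (z : Fin a → ℝ) : Prop :=
  ∀ i, J i i = 1 ↔ 0 < z i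

/-- `x` lies in the activation domain of a single residual block w.r.t. `J`. -/
def blockDomain (d q : ℕ) (hq : 0 < q) (c : ℕ → ℕ) (hc0 : c 0 = d) (hcq : c q = d)
    (W : ∀ m, Matrix (Fin (c (m+1))) (Fin (c m)) ℝ)
    (b : ∀ m, Fin (c (m+1)) → ℝ)
    (J : ∀ m, Matrix (Fin (c (m+1))) (Fin (c (m+1))) ℝ) (x : Fin d → ℝ) : Prop :=
  (∀ m, m + 1 < q →
    inPattern (J m) ((W m).mulVec (hiddenSeq c W b m (castVec hc0.symm x)) + b m)) ∧
  inPattern (J (q-1)) ((W (q-1)).mulVec (hiddenSeq c W b (q-1) (castVec hc0.symm x))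
    + castVec (show c (q-1+1) = d from
        (congrArg c (Nat.succ_pred_eq_of_pos hq)).trans hcq).symm x + b (q-1))

/-- The input fed to block `k` (output of the previous blocks; the input itself when `k = 0`). -/
def netInput (d : ℕ) (q : ℕ → ℕ) (hq : ∀ n, 0 < q n) (c : ℕ → ℕ → ℕ)
    (hc0 : ∀ n, c n 0 = d) (hcq : ∀ n, c n (q n) = d)
    (W : ∀ n m, Matrix (Fin (c n (m+1))) (Fin (c n m)) ℝ)
    (b : ∀ n m, Fin (c n (m+1)) → ℝ) :
    ℕ → (Fin d → ℝ) → Fin d → ℝ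
  | 0 => fun x => x
  | k+1 => resNet d q hq c hc0 hcq W b k

/-- Activation domain of the multi-residual-block network `𝒩_{c,q,n}` w.r.t. `J`:
`x ∈ [0,1]^d` and at each layer of each block the pre-activation has the pattern of `J`. -/
def InActDomain (d : ℕ) (q : ℕ → ℕ) (hq : ∀ n, 0 < q n) (c : ℕ → ℕ → ℕ)
    (hc0 : ∀ n, c n 0 = d) (hcq : ∀ n, c n (q n) = d)
    (W : ∀ n m, Matrix (Fin (c n (m+1))) (Fin (c n m)) ℝ)
    (b : ∀ n m, Fin (c n (m+1)) → ℝ)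
    (J : ∀ n m, Matrix (Fin (c n (m+1))) (Fin (c n (m+1))) ℝ)
    (n : ℕ) (x : Fin d → ℝ) : Prop :=
  (∀ i, x i ∈ Set.Icc (0:ℝ) 1) ∧
  ∀ k ≤ n, blockDomain d (q k) (hq k) (c k) (hc0 k) (hcq k) (W k) (b k) (J k)
    (netInput d q hq c hc0 hcq W b k x)

/-- `prodSeg f a n = f n * f (n-1) * ⋯ * f a` (the identity when `n < a`). -/
def prodSeg {α : Type*} [Monoid α] (f : ℕ → α) (a n : ℕ) : α :=
  ((List.range' a (n + 1 - a)).reverse.map f).prod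

/-- `innerProdFrom c W J a m = (J (a+m) W (a+m)) ⋯ (J (a+1) W (a+1)) (J a W a)`,
i.e. the product `∏_{m'=a+1}^{a+m} J_{m'} W_{m'}` in the 1-based indexing of the paper. -/
def innerProdFrom (c : ℕ → ℕ) (W : ∀ m, Matrix (Fin (c (m+1))) (Fin (c m)) ℝ)
    (J : ∀ m, Matrix (Fin (c (m+1))) (Fin (c (m+1))) ℝ) (a : ℕ) :
    (m : ℕ) → Matrix (Fin (c (a + m))) (Fin (c a)) ℝ
  | 0 => (1 : Matrix (Fin (c a)) (Fin (c a)) ℝ)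
  | m+1 => (J (a + m) * W (a + m)) * innerProdFrom c W J a m

/-- The matrix `∏_{m=1}^{q} J_m W_m + J_q` of a residual block. -/
def blockMat (d q : ℕ) (hq : 0 < q) (c : ℕ → ℕ) (hc0 : c 0 = d) (hcq : c q = d)
    (W : ∀ m, Matrix (Fin (c (m+1))) (Fin (c m)) ℝ)
    (J : ∀ m, Matrix (Fin (c (m+1))) (Fin (c (m+1))) ℝ) :
    Matrix (Fin d) (Fin d) ℝ :=
  mcast ((congrArg c (Nat.zero_add q)).trans hcq) hc0 (innerProdFrom c W J 0 q)
    + mcast (show c (q-1+1) = d from (congrArg c (Nat.succ_pred_eq_of_pos hq)).trans hcq)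
        (show c (q-1+1) = d from (congrArg c (Nat.succ_pred_eq_of_pos hq)).trans hcq) (J (q-1))

/-- `Aseq n = ∏_{k=0}^{n} (∏_{m=1}^{q_k} J^{(k)}_m W^{(k)}_m + J^{(k)}_{q_k})`. -/
def Aseq (d : ℕ) (q : ℕ → ℕ) (hq : ∀ n, 0 < q n) (c : ℕ → ℕ → ℕ)
    (hc0 : ∀ n, c n 0 = d) (hcq : ∀ n, c n (q n) = d)
    (W : ∀ n m, Matrix (Fin (c n (m+1))) (Fin (c n m)) ℝ)
    (J : ∀ n m, Matrix (Fin (c n (m+1))) (Fin (c n (m+1))) ℝ) (n : ℕ) :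
    Matrix (Fin d) (Fin d) ℝ :=
  prodSeg (fun k => blockMat d (q k) (hq k) (c k) (hc0 k) (hcq k) (W k) (J k)) 0 n

/-- `∑_{m=1}^{q} (∏_{m'=m+1}^{q} J_{m'} W_{m'}) J_m b_m` for one residual block. -/
def blockBias (d q : ℕ) (c : ℕ → ℕ) (hcq : c q = d)
    (W : ∀ m, Matrix (Fin (c (m+1))) (Fin (c m)) ℝ)
    (b : ∀ m, Fin (c (m+1)) → ℝ)
    (J : ∀ m, Matrix (Fin (c (m+1))) (Fin (c (m+1))) ℝ) : Fin d → ℝ :=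
  ∑ m ∈ (Finset.range q).attach,
    (mcast ((congrArg c (Nat.add_sub_cancel' (Finset.mem_range.mp m.2))).trans hcq) rfl
        (innerProdFrom c W J (m.1+1) (q - (m.1+1)))).mulVec ((J m.1).mulVec (b m.1))

/-- `Bseq n = ∑_{k=0}^{n} ∑_{m=1}^{q_k} [∏_{k'=k+1}^{n} (∏_{m'} J W + J)] (∏_{m'>m} J W) J_m b_m`. -/
def Bseq (d : ℕ) (q : ℕ → ℕ) (hq : ∀ n, 0 < q n) (c : ℕ → ℕ → ℕ)
    (hc0 : ∀ n, c n 0 = d) (hcq : ∀ n, c n (q n) = d)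
    (W : ∀ n m, Matrix (Fin (c n (m+1))) (Fin (c n m)) ℝ)
    (b : ∀ n m, Fin (c n (m+1)) → ℝ)
    (J : ∀ n m, Matrix (Fin (c n (m+1))) (Fin (c n (m+1))) ℝ) (n : ℕ) : Fin d → ℝ :=
  ∑ k ∈ Finset.range (n+1),
    (prodSeg (fun k' => blockMat d (q k') (hq k') (c k') (hc0 k') (hcq k') (W k') (J k'))
        (k+1) n).mulVec
      (blockBias d (q k) (c k) (hcq k) (W k) (b k) (J k))

/-- A family of norms on the spaces `ℝ^m` which is monotone in the sense of the paper. -/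
structure NormFamily where
  N : ∀ m : ℕ, (Fin m → ℝ) → ℝ
  eq_zero_iff : ∀ (m : ℕ) (x : Fin m → ℝ), N m x = 0 ↔ x = 0
  add_le : ∀ (m : ℕ) (x y : Fin m → ℝ), N m (x + y) ≤ N m x + N m y
  smul_eq : ∀ (m : ℕ) (r : ℝ) (x : Fin m → ℝ), N m (r • x) = |r| * N m x
  mono : ∀ (m : ℕ) (x y : Fin m → ℝ), (∀ i, |x i| ≤ |y i|) → N m x ≤ N m y

/-- The operator (matrix) norm induced by a family of vector norms. -/
def NormFamily.op (F : NormFamily) {a b : ℕ} (M : Matrix (Fin a) (Fin b) ℝ) : ℝ :=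
  sSup ((fun x => F.N a (M.mulVec x) / F.N b x) '' {x : Fin b → ℝ | x ≠ 0})

/-- 1-D Toeplitz convolution-with-zero-padding matrix of a filter mask `u ∈ ℝ^{2f+1}`:
`(T1 f d u) a b = u (f - b + a)` when `-f ≤ b - a ≤ f` and `0` otherwise. -/
def T1 (f d : ℕ) (u : Fin (2*f+1) → ℝ) : Matrix (Fin d) (Fin d) ℝ :=
  fun a b =>
    if h : -(f:ℤ) ≤ ((b:ℕ):ℤ) - ((a:ℕ):ℤ) ∧ ((b:ℕ):ℤ) - ((a:ℕ):ℤ) ≤ (f:ℤ) then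
      u ⟨((f:ℤ) - ((b:ℕ):ℤ) + ((a:ℕ):ℤ)).toNat, by omega⟩
    else 0

/-- 2-D block Toeplitz convolution matrix of a mask `v ∈ ℝ^{(2f+1)×(2f+1)}`:
the `(a,b)` block is `T1 f d (v (f - b + a))` when `-f ≤ b - a ≤ f` and `0` otherwise. -/
def T2 (f d : ℕ) (v : Fin (2*f+1) → Fin (2*f+1) → ℝ) :
    Matrix (Fin d × Fin d) (Fin d × Fin d) ℝ :=
  fun P Q =>
    if h : -(f:ℤ) ≤ ((Q.1:ℕ):ℤ) - ((P.1:ℕ):ℤ) ∧ ((Q.1:ℕ):ℤ) - ((P.1:ℕ):ℤ) ≤ (f:ℤ) then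
      T1 f d (v ⟨((f:ℤ) - ((Q.1:ℕ):ℤ) + ((P.1:ℕ):ℤ)).toNat, by omega⟩) P.2 Q.2
    else 0

/-- The block matrix `T(w)` of a multi-channel convolution
with `cin` input channels and `cout` output channels: the `(i,j)` block is `T2 f d (w i j)`. -/
def Tmulti (f d cin cout : ℕ)
    (w : Fin cout → Fin cin → Fin (2*f+1) → Fin (2*f+1) → ℝ) :
    Matrix (Fin cout × Fin d × Fin d) (Fin cin × Fin d × Fin d) ℝ :=
  fun P Q => T2 f d (w P.1 Q.1) P.2 Q.2

/-- Multi-channel 2-D convolution with zero padding, as matrix-vector multiplication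
by the Toeplitz-type matrices `T2`. -/
def convLayer (f d cin cout : ℕ)
    (w : Fin cout → Fin cin → Fin (2*f+1) → Fin (2*f+1) → ℝ)
    (x : Fin cin → Fin d → Fin d → ℝ) : Fin cout → Fin d → Fin d → ℝ :=
  fun i a b => ∑ j, ∑ s, ∑ t, T2 f d (w i j) (a, b) (s, t) * x j s t

/-- Cast the channel index of a tensor along an equality of channel numbers. -/
def castChan {d a b : ℕ} (h : a = b) (x : Fin a → Fin d → Fin d → ℝ) :
    Fin b → Fin d → Fin d → ℝ :=
  fun i => x (Fin.cast h.symm i)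

/-- Hidden layers of a convolutional residual block (with constant-per-channel biases `β`). -/
def convHidden (d : ℕ) (c : ℕ → ℕ) (f : ℕ → ℕ)
    (w : ∀ m, Fin (c (m+1)) → Fin (c m) → Fin (2 * f m + 1) → Fin (2 * f m + 1) → ℝ)
    (β : ∀ m, Fin (c (m+1)) → ℝ) :
    (m : ℕ) → (Fin (c 0) → Fin d → Fin d → ℝ) → Fin (c m) → Fin d → Fin d → ℝ
  | 0 => fun x => x
  | m+1 => fun x i a b =>
      max (convLayer (f m) d (c m) (c (m+1)) (w m) (convHidden d c f w β m x) i a b + β m i) 0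

/-- A convolutional residual block with `Q ≥ 1` convolutional layers and a shortcut connection. -/
def convBlock (d Q : ℕ) (hQ : 0 < Q) (cres : ℕ) (c : ℕ → ℕ)
    (hc0 : c 0 = cres) (hcq : c Q = cres) (f : ℕ → ℕ)
    (w : ∀ m, Fin (c (m+1)) → Fin (c m) → Fin (2 * f m + 1) → Fin (2 * f m + 1) → ℝ)
    (β : ∀ m, Fin (c (m+1)) → ℝ)
    (x : Fin cres → Fin d → Fin d → ℝ) : Fin cres → Fin d → Fin d → ℝ :=
  castChan (show c (Q-1+1) = cres from (congrArg c (Nat.succ_pred_eq_of_pos hQ)).trans hcq)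
    (fun i a b =>
      max (convLayer (f (Q-1)) d (c (Q-1)) (c (Q-1+1)) (w (Q-1))
            (convHidden d c f w β (Q-1) (castChan hc0.symm x)) i a b
          + x (Fin.cast (show c (Q-1+1) = cres from
              (congrArg c (Nat.succ_pred_eq_of_pos hQ)).trans hcq) i) a b
          + β (Q-1) i) 0)

/-- The deep convolutional ResNet without the output layer: sampling layer
`σ(x ∗ w_s + b_s)` (block `0`) followed by the convolutional residual blocks `1,…,n`. -/
def convNet (d cin cres : ℕ) (q : ℕ → ℕ) (hq : ∀ n, 0 < q n)
    (c : ℕ → ℕ → ℕ) (hc00 : c 0 0 = cin) (h01 : c 0 1 = cres)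
    (hc0 : ∀ n, 0 < n → c n 0 = cres) (hcq : ∀ n, 0 < n → c n (q n) = cres)
    (f : ℕ → ℕ → ℕ)
    (w : ∀ n m, Fin (c n (m+1)) → Fin (c n m) → Fin (2 * f n m + 1) → Fin (2 * f n m + 1) → ℝ)
    (β : ∀ n m, Fin (c n (m+1)) → ℝ) :
    ℕ → (Fin cin → Fin d → Fin d → ℝ) → Fin cres → Fin d → Fin d → ℝ
  | 0 => fun x => castChan h01 (fun i a b =>
      max (convLayer (f 0 0) d (c 0 0) (c 0 1) (w 0 0) (castChan hc00.symm x) i a b + β 0 0 i) 0)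
  | n+1 => fun x =>
      convBlock d (q (n+1)) (hq (n+1)) cres (c (n+1)) (hc0 (n+1) (Nat.succ_pos n))
        (hcq (n+1) (Nat.succ_pos n)) (f (n+1)) (w (n+1)) (β (n+1))
        (convNet d cin cres q hq c hc00 h01 hc0 hcq f w β n x)

/-- The ℓ_p norm of a vector, `p ∈ [1,∞]`. -/
def lpNorm (p : ℝ≥0∞) {ι : Type*} [Fintype ι] (x : ι → ℝ) : ℝ :=
  if p = ∞ then ⨆ i, |x i| else (∑ i, |x i| ^ p.toReal) ^ (1 / p.toReal)

/-- The matrix (operator) norm induced by the ℓ_p vector norms. -/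
def opNormP (p : ℝ≥0∞) {α β : Type*} [Fintype α] [Fintype β] (M : Matrix α β ℝ) : ℝ :=
  sSup ((fun x => lpNorm p (M.mulVec x) / lpNorm p x) '' {x : β → ℝ | x ≠ 0})

/-- Maximum absolute column sum of a matrix (the operator norm induced by ℓ₁). -/
def maxColSum {α β : Type*} [Fintype α] [Fintype β] (M : Matrix α β ℝ) : ℝ :=
  ⨆ j, ∑ i, |M i j|

/-- Maximum absolute row sum of a matrix (the operator norm induced by ℓ_∞). -/
def maxRowSum {α β : Type*} [Fintype α] [Fintype β] (M : Matrix α β ℝ) : ℝ :=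
  ⨆ i, ∑ j, |M i j|

/-- The block matrix with blocks `A i j ∈ ℝ^{r×c}`, `i < N`, `j < M`. -/
def blockMatrixOf {N M r c : ℕ} (A : Fin N → Fin M → Matrix (Fin r) (Fin c) ℝ) :
    Matrix (Fin N × Fin r) (Fin M × Fin c) ℝ :=
  fun p q => A p.1 q.1 p.2 q.2

/-- The factor `N^{(n)}_m` of Theorem 5.2: the bound of Lemma 5.1 on `‖T(w)‖_p`. -/
def Nfactor (p : ℝ≥0∞) {f cin cout : ℕ}
    (w : Fin cout → Fin cin → Fin (2*f+1) → Fin (2*f+1) → ℝ) : ℝ :=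
  (⨆ j : Fin cin, ∑ i, ∑ i', ∑ j', |w i j i' j'|) ^ ((1/p).toReal)
    * (⨆ i : Fin cout, ∑ j, ∑ i', ∑ j', |w i j i' j'|) ^ (1 - (1/p).toReal)

/-- Zero padding of a vector `x ∈ ℝ^{din}` to a vector `(x, 0) ∈ ℝ^{d}`. -/
def padVec (din d : ℕ) (x : Fin din → ℝ) : Fin d → ℝ :=
  fun i => if h : (i : ℕ) < din then x ⟨i, h⟩ else 0

/-- The matrix `[Ws  0] ∈ ℝ^{d × d}` obtained by padding `Ws ∈ ℝ^{d × din}` with zero columns. -/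
def padMat (din d : ℕ) (Ws : Matrix (Fin d) (Fin din) ℝ) : Matrix (Fin d) (Fin d) ℝ :=
  fun i j => if h : (j : ℕ) < din then Ws i ⟨j, h⟩ else 0

namespace NormFamily

variable (F : NormFamily)

lemma n_zero (m : ℕ) : F.N m 0 = 0 := (F.eq_zero_iff m 0).mpr rfl

lemma n_neg (m : ℕ) (x : Fin m → ℝ) : F.N m (-x) = F.N m x := by
  have h := F.smul_eq m (-1) x
  simpa using h

lemma n_nonneg (m : ℕ) (x : Fin m → ℝ) : 0 ≤ F.N m x := by
  have h := F.add_le m x (-x)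
  rw [add_neg_cancel, n_zero, n_neg] at h
  linarith

lemma n_pos {m : ℕ} {x : Fin m → ℝ} (hx : x ≠ 0) : 0 < F.N m x :=
  lt_of_le_of_ne (F.n_nonneg m x) fun h => hx ((F.eq_zero_iff m x).mp h.symm)

lemma single_ne_zero (m : ℕ) (i : Fin m) : (Pi.single i 1 : Fin m → ℝ) ≠ 0 := by
  intro h
  have := congrFun h i
  simp at this

lemma abs_le_inv_mul (m : ℕ) (x : Fin m → ℝ) (i : Fin m) :
    |x i| ≤ (F.N m (Pi.single i 1))⁻¹ * F.N m x := by
  have hpos := F.n_pos (single_ne_zero m i)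
  rw [inv_mul_eq_div, le_div_iff₀ hpos]
  have h1 : |x i| * F.N m (Pi.single i 1) = F.N m (x i • (Pi.single i 1 : Fin m → ℝ)) :=
    (F.smul_eq m (x i) (Pi.single i 1)).symm
  rw [h1]
  apply F.mono
  intro j
  by_cases hj : j = i
  · subst hj
    simp [Pi.smul_apply, Pi.single_eq_same, abs_mul]
  · simp [Pi.smul_apply, Pi.single_eq_of_ne hj]

lemma n_le_const {m : ℕ} {x : Fin m → ℝ} {t : ℝ} (ht : 0 ≤ t) (h : ∀ i, |x i| ≤ t) :
    F.N m x ≤ t * F.N m (fun _ => 1) := by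
  have h1 : F.N m x ≤ F.N m (fun _ => t) := by
    apply F.mono
    intro i
    simpa [abs_of_nonneg ht] using h i
  have h2 : F.N m (fun _ => (t:ℝ)) = |t| * F.N m (fun _ => 1) := by
    have := F.smul_eq m t (fun _ => 1)
    simpa [Pi.smul_def] using this
  rw [h2, abs_of_nonneg ht] at h1
  exact h1

lemma exists_bound {a bb : ℕ} (M : Matrix (Fin a) (Fin bb) ℝ) :
    ∃ K, ∀ v, F.N a (M.mulVec v) ≤ K * F.N bb v := by
  classical
  set T : ℝ := ∑ j, (F.N bb (Pi.single j 1))⁻¹ * (∑ i, |M i j|) with hT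
  have hT0 : 0 ≤ T := Finset.sum_nonneg fun j _ => mul_nonneg
    (inv_nonneg.mpr (F.n_nonneg _ _)) (Finset.sum_nonneg fun i _ => abs_nonneg _)
  refine ⟨F.N a (fun _ => 1) * T, fun v => ?_⟩
  have hcomp : ∀ i, |M.mulVec v i| ≤ T * F.N bb v := by
    intro i
    have h1 : |M.mulVec v i| ≤ ∑ j, |M i j| * |v j| := by
      calc |M.mulVec v i| = |∑ j, M i j * v j| := by simp [Matrix.mulVec, dotProduct]
        _ ≤ ∑ j, |M i j * v j| := Finset.abs_sum_le_sum_abs _ _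
        _ = ∑ j, |M i j| * |v j| := by simp [abs_mul]
    have h2 : ∑ j, |M i j| * |v j| ≤ ∑ j, ((F.N bb (Pi.single j 1))⁻¹ * (∑ i', |M i' j|)) * F.N bb v := by
      apply Finset.sum_le_sum
      intro j _
      have hv := F.abs_le_inv_mul bb v j
      have hMj : |M i j| ≤ ∑ i', |M i' j| :=
        Finset.single_le_sum (f := fun i' => |M i' j|) (fun i' _ => abs_nonneg _) (Finset.mem_univ i)
      calc |M i j| * |v j| ≤ (∑ i', |M i' j|) * ((F.N bb (Pi.single j 1))⁻¹ * F.N bb v) := by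
            apply mul_le_mul hMj hv (abs_nonneg _)
            exact Finset.sum_nonneg fun i' _ => abs_nonneg _
        _ = ((F.N bb (Pi.single j 1))⁻¹ * (∑ i', |M i' j|)) * F.N bb v := by ring
    calc |M.mulVec v i| ≤ ∑ j, ((F.N bb (Pi.single j 1))⁻¹ * (∑ i', |M i' j|)) * F.N bb v := h1.trans h2
      _ = T * F.N bb v := by rw [← Finset.sum_mul]
  have := F.n_le_const (mul_nonneg hT0 (F.n_nonneg _ _)) hcomp
  calc F.N a (M.mulVec v) ≤ (T * F.N bb v) * F.N a (fun _ => 1) := this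
    _ = (F.N a (fun _ => 1) * T) * F.N bb v := by ring

lemma op_spec {a bb : ℕ} (hbb : 0 < bb) (M : Matrix (Fin a) (Fin bb) ℝ) :
    0 ≤ F.op M ∧ ∀ v, F.N a (M.mulVec v) ≤ F.op M * F.N bb v := by
  classical
  obtain ⟨K, hK⟩ := F.exists_bound M
  have hbdd : BddAbove ((fun x => F.N a (M.mulVec x) / F.N bb x) '' {x : Fin bb → ℝ | x ≠ 0}) := by
    refine ⟨K, ?_⟩
    rintro r ⟨v, hv, rfl⟩
    rw [div_le_iff₀ (F.n_pos hv)]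
    exact hK v
  have hne : (Pi.single (⟨0, hbb⟩ : Fin bb) 1 : Fin bb → ℝ) ≠ 0 := single_ne_zero bb _
  have hmem : F.N a (M.mulVec (Pi.single ⟨0, hbb⟩ 1)) / F.N bb (Pi.single ⟨0, hbb⟩ 1)
      ∈ (fun x => F.N a (M.mulVec x) / F.N bb x) '' {x : Fin bb → ℝ | x ≠ 0} :=
    ⟨_, hne, rfl⟩
  have h0 : 0 ≤ F.op M :=
    le_trans (div_nonneg (F.n_nonneg _ _) (F.n_nonneg _ _)) (le_csSup hbdd hmem)
  refine ⟨h0, fun v => ?_⟩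
  by_cases hv : v = 0
  · subst hv
    simp [Matrix.mulVec_zero, n_zero]
  · have hpos := F.n_pos (m := bb) hv
    have hle : F.N a (M.mulVec v) / F.N bb v ≤ F.op M := le_csSup hbdd ⟨v, hv, rfl⟩
    calc F.N a (M.mulVec v) = (F.N a (M.mulVec v) / F.N bb v) * F.N bb v := by
          field_simp
      _ ≤ F.op M * F.N bb v := mul_le_mul_of_nonneg_right hle hpos.le

lemma op_nonneg {a bb : ℕ} (hbb : 0 < bb) (M : Matrix (Fin a) (Fin bb) ℝ) : 0 ≤ F.op M :=
  (F.op_spec hbb M).1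

lemma n_mulVec_le {a bb : ℕ} (hbb : 0 < bb) (M : Matrix (Fin a) (Fin bb) ℝ) (v : Fin bb → ℝ) :
    F.N a (M.mulVec v) ≤ F.op M * F.N bb v :=
  (F.op_spec hbb M).2 v

lemma n_relu_le (m : ℕ) (x : Fin m → ℝ) : F.N m (relu x) ≤ F.N m x := by
  apply F.mono
  intro i
  simp only [relu]
  rcases le_total (x i) 0 with h | h
  · simp [max_eq_right h]
  · simp [max_eq_left h]

lemma n_castVec {a bb : ℕ} (h : a = bb) (v : Fin a → ℝ) :
    F.N bb (castVec h v) = F.N a v := by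
  subst h
  rfl

end NormFamily
lemma abs_relu_shift_sub {u t : ℝ} (ht : 0 ≤ t) : |max (u + t) 0 - t| ≤ |u| := by
  rcases le_total (u + t) 0 with h | h
  · rw [max_eq_right h]
    rw [abs_le]
    constructor
    · have := neg_abs_le u; linarith
    · have := le_abs_self u; have := neg_abs_le u; linarith
  · rw [max_eq_left h]
    simp [abs_le, le_abs_self u, neg_abs_le u]

lemma fin_cast_cast {a bb : ℕ} (h1 : a = bb) (h2 : bb = a) (i : Fin a) :
    Fin.cast h2 (Fin.cast h1 i) = i := by
  apply Fin.ext
  simp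

lemma hidden_le (F : NormFamily) (c : ℕ → ℕ)
    (W : ∀ m, Matrix (Fin (c (m+1))) (Fin (c m)) ℝ)
    (b : ∀ m, Fin (c (m+1)) → ℝ) (x : Fin (c 0) → ℝ) :
    ∀ m, (∀ j, j < m → 0 < c j) →
      F.N (c m) (hiddenSeq c W b m x) ≤
        (∏ j ∈ Finset.range m, F.op (W j)) * F.N (c 0) x +
          ∑ j ∈ Finset.range m, (∏ j' ∈ Finset.Ico (j+1) m, F.op (W j')) * F.N (c (j+1)) (b j) := by
  intro m
  induction m with
  | zero => intro _; simp [hiddenSeq]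
  | succ m ih =>
    intro hpos
    have ih' := ih fun j hj => hpos j (hj.trans (Nat.lt_succ_self m))
    have hop : 0 ≤ F.op (W m) := F.op_nonneg (hpos m (Nat.lt_succ_self m)) _
    have h1 : F.N (c (m+1)) (hiddenSeq c W b (m+1) x)
        ≤ F.op (W m) * F.N (c m) (hiddenSeq c W b m x) + F.N (c (m+1)) (b m) := by
      calc F.N (c (m+1)) (hiddenSeq c W b (m+1) x)
          ≤ F.N (c (m+1)) ((W m).mulVec (hiddenSeq c W b m x) + b m) :=
            F.n_relu_le _ _
        _ ≤ F.N (c (m+1)) ((W m).mulVec (hiddenSeq c W b m x)) + F.N (c (m+1)) (b m) :=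
            F.add_le _ _ _
        _ ≤ _ := add_le_add_left (F.n_mulVec_le (hpos m (Nat.lt_succ_self m)) _ _) _
    have hsum : (∑ j ∈ Finset.range (m+1),
          (∏ j' ∈ Finset.Ico (j+1) (m+1), F.op (W j')) * F.N (c (j+1)) (b j))
        = F.op (W m) * (∑ j ∈ Finset.range m,
            (∏ j' ∈ Finset.Ico (j+1) m, F.op (W j')) * F.N (c (j+1)) (b j))
          + F.N (c (m+1)) (b m) := by
      rw [Finset.sum_range_succ, Finset.mul_sum]
      congr 1
      · refine Finset.sum_congr rfl fun j hj => ?_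
        rw [Finset.prod_Ico_succ_top (Nat.succ_le_of_lt (Finset.mem_range.mp hj))]
        ring
      · simp
    rw [Finset.prod_range_succ, hsum]
    calc F.N (c (m+1)) (hiddenSeq c W b (m+1) x)
        ≤ F.op (W m) * F.N (c m) (hiddenSeq c W b m x) + F.N (c (m+1)) (b m) := h1
      _ ≤ F.op (W m) * ((∏ j ∈ Finset.range m, F.op (W j)) * F.N (c 0) x +
            ∑ j ∈ Finset.range m, (∏ j' ∈ Finset.Ico (j+1) m, F.op (W j')) * F.N (c (j+1)) (b j))
            + F.N (c (m+1)) (b m) :=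
          add_le_add_left (mul_le_mul_of_nonneg_left ih' hop) _
      _ = _ := by ring

lemma resBlock_nonneg {d Q : ℕ} (hQ : 0 < Q) (c : ℕ → ℕ) (hc0 : c 0 = d) (hcQ : c Q = d)
    (W : ∀ m, Matrix (Fin (c (m+1))) (Fin (c m)) ℝ) (b : ∀ m, Fin (c (m+1)) → ℝ)
    (x : Fin d → ℝ) (i : Fin d) : 0 ≤ resBlock d Q hQ c hc0 hcQ W b x i := by
  simp only [resBlock, castVec, relu]
  exact le_max_right _ _

lemma resBlock_bound (F : NormFamily) {d Q : ℕ} (hQ : 0 < Q) (c : ℕ → ℕ)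
    (hc0 : c 0 = d) (hcQ : c Q = d) (hpos : ∀ m, m < Q → 0 < c m)
    (W : ∀ m, Matrix (Fin (m+1 |> c)) (Fin (c m)) ℝ) (b : ∀ m, Fin (c (m+1)) → ℝ)
    (x : Fin d → ℝ) (hx : ∀ i, 0 ≤ x i) :
    F.N d (resBlock d Q hQ c hc0 hcQ W b x - x) ≤
      (∏ m ∈ Finset.range Q, F.op (W m)) * F.N d x
        + ∑ m ∈ Finset.range Q, (∏ m' ∈ Finset.Ico (m+1) Q, F.op (W m')) * F.N (c (m+1)) (b m) := by
  obtain ⟨Q', rfl⟩ : ∃ Q', Q = Q' + 1 := ⟨Q - 1, (Nat.succ_pred_eq_of_pos hQ).symm⟩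
  set e : c (Q' + 1 - 1 + 1) = d :=
    (congrArg c (Nat.succ_pred_eq_of_pos hQ)).trans hcQ with he
  set z : Fin (c (Q' + 1)) → ℝ :=
    (W Q').mulVec (hiddenSeq c W b Q' (castVec hc0.symm x)) + b Q' with hz
  have hcoord : ∀ i, |(resBlock d (Q'+1) hQ c hc0 hcQ W b x - x) i| ≤ |castVec e z i| := by
    intro i
    simp only [resBlock, Pi.sub_apply, castVec, relu, Pi.add_apply]
    have hc : x (Fin.cast (Eq.symm (Eq.symm e)) (Fin.cast e.symm i)) = x i := by
      rw [fin_cast_cast]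
    rw [hc]
    have harg : (W (Q'+1-1)).mulVec (hiddenSeq c W b (Q'+1-1) (castVec hc0.symm x))
          (Fin.cast e.symm i) + x i + b (Q'+1-1) (Fin.cast e.symm i)
        = z (Fin.cast e.symm i) + x i := by
      show (W Q').mulVec (hiddenSeq c W b Q' (castVec hc0.symm x))
            (Fin.cast e.symm i) + x i + b Q' (Fin.cast e.symm i)
          = z (Fin.cast e.symm i) + x i
      simp only [hz, Pi.add_apply]
      ring
    rw [harg]
    exact abs_relu_shift_sub (hx i)
  have h1 : F.N d (resBlock d (Q'+1) hQ c hc0 hcQ W b x - x) ≤ F.N d (castVec e z) := by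
    apply F.mono
    intro i
    exact hcoord i
  have h2 : F.N d (castVec e z) = F.N (c (Q'+1)) z := F.n_castVec e z
  have h3 : F.N (c (Q'+1)) z
      ≤ F.op (W Q') * F.N (c Q') (hiddenSeq c W b Q' (castVec hc0.symm x))
        + F.N (c (Q'+1)) (b Q') := by
    calc F.N (c (Q'+1)) z
        ≤ F.N (c (Q'+1)) ((W Q').mulVec (hiddenSeq c W b Q' (castVec hc0.symm x)))
          + F.N (c (Q'+1)) (b Q') := F.add_le _ _ _
      _ ≤ _ := add_le_add_left (F.n_mulVec_le (hpos Q' (Nat.lt_succ_self Q')) _ _) _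
  have hop : 0 ≤ F.op (W Q') := F.op_nonneg (hpos Q' (Nat.lt_succ_self Q')) _
  have hhid := hidden_le F c W b (castVec hc0.symm x) Q'
    (fun j hj => hpos j (hj.trans (Nat.lt_succ_self Q')))
  rw [F.n_castVec hc0.symm x] at hhid
  have hsum : (∑ m ∈ Finset.range (Q'+1),
        (∏ m' ∈ Finset.Ico (m+1) (Q'+1), F.op (W m')) * F.N (c (m+1)) (b m))
      = F.op (W Q') * (∑ m ∈ Finset.range Q',
          (∏ m' ∈ Finset.Ico (m+1) Q', F.op (W m')) * F.N (c (m+1)) (b m))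
        + F.N (c (Q'+1)) (b Q') := by
    rw [Finset.sum_range_succ, Finset.mul_sum]
    congr 1
    · refine Finset.sum_congr rfl fun j hj => ?_
      rw [Finset.prod_Ico_succ_top (Nat.succ_le_of_lt (Finset.mem_range.mp hj))]
      ring
    · simp
  rw [Finset.prod_range_succ, hsum]
  calc F.N d (resBlock d (Q'+1) hQ c hc0 hcQ W b x - x)
      ≤ F.op (W Q') * F.N (c Q') (hiddenSeq c W b Q' (castVec hc0.symm x))
        + F.N (c (Q'+1)) (b Q') := by rw [← h2] at h3; exact h1.trans h3
    _ ≤ F.op (W Q') * ((∏ j ∈ Finset.range Q', F.op (W j)) * F.N d x +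
          ∑ j ∈ Finset.range Q', (∏ j' ∈ Finset.Ico (j+1) Q', F.op (W j')) * F.N (c (j+1)) (b j))
          + F.N (c (Q'+1)) (b Q') :=
        add_le_add_left (mul_le_mul_of_nonneg_left hhid hop) _
    _ = _ := by ring
theorem stmt4 (F : NormFamily)
    (d : ℕ) (hd : 0 < d)
    (q : ℕ → ℕ) (hq : ∀ k, 0 < q k) (hqb : ∃ Q, ∀ k, q k ≤ Q)
    (c : ℕ → ℕ → ℕ) (hcpos : ∀ k m, m ≤ q k → 0 < c k m)
    (hc0 : ∀ k, c k 0 = d) (hcq : ∀ k, c k (q k) = d)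
    (W : ∀ k m, Matrix (Fin (c k (m+1))) (Fin (c k m)) ℝ)
    (b : ∀ k m, Fin (c k (m+1)) → ℝ)
    (hW : Summable fun k => ∏ m ∈ Finset.range (q k), F.op (W k m))
    (hb : Summable fun k => ∑ m ∈ Finset.range (q k),
      (∏ m' ∈ Finset.Ico (m+1) (q k), F.op (W k m')) * F.N (c k (m+1)) (b k m)) :
    ∀ x : Fin d → ℝ, (∀ i, x i ∈ Set.Icc (0:ℝ) 1) →
      ∃ y, Tendsto (fun n => resNet d q hq c hc0 hcq W b n x) atTop (nhds y) := by
  intro x hx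
  classical
  set y : ℕ → Fin d → ℝ := fun n => resNet d q hq c hc0 hcq W b n x with hy
  have hxnn : ∀ i, 0 ≤ x i := fun i => (hx i).1
  set P : ℕ → ℝ := fun k => ∏ m ∈ Finset.range (q k), F.op (W k m) with hPdef
  set Bs : ℕ → ℝ := fun k => ∑ m ∈ Finset.range (q k),
    (∏ m' ∈ Finset.Ico (m+1) (q k), F.op (W k m')) * F.N (c k (m+1)) (b k m) with hBdef
  have hP0 : ∀ k, 0 ≤ P k := fun k => Finset.prod_nonneg fun m hm =>
    F.op_nonneg (hcpos k m (le_of_lt (Finset.mem_range.mp hm))) _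
  have hB0 : ∀ k, 0 ≤ Bs k := fun k => Finset.sum_nonneg fun m hm => mul_nonneg
    (Finset.prod_nonneg fun m' hm' =>
      F.op_nonneg (hcpos k m' ((Finset.mem_Ico.mp hm').2).le) _)
    (F.n_nonneg _ _)
  have hW' : Summable P := hW
  have hb' : Summable Bs := hb
  -- nonnegativity of outputs
  have hynn : ∀ n i, 0 ≤ y n i := by
    intro n
    cases n with
    | zero =>
      exact resBlock_nonneg (hq 0) (c 0) (hc0 0) (hcq 0) (W 0) (b 0) x
    | succ n =>
      exact resBlock_nonneg (hq (n+1)) (c (n+1)) (hc0 (n+1)) (hcq (n+1)) (W (n+1)) (b (n+1)) (y n)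
  -- one-step estimates
  have hstep : ∀ n, F.N d (y (n+1) - y n) ≤ P (n+1) * F.N d (y n) + Bs (n+1) := fun n =>
    resBlock_bound F (hq (n+1)) (c (n+1)) (hc0 (n+1)) (hcq (n+1))
      (fun m hm => hcpos (n+1) m hm.le) (W (n+1)) (b (n+1)) (y n) (hynn n)
  have hstep0 : F.N d (y 0 - x) ≤ P 0 * F.N d x + Bs 0 :=
    resBlock_bound F (hq 0) (c 0) (hc0 0) (hcq 0)
      (fun m hm => hcpos 0 m hm.le) (W 0) (b 0) x hxnn
  have htri : ∀ (u v : Fin d → ℝ), F.N d u ≤ F.N d (u - v) + F.N d v := by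
    intro u v
    have h := F.add_le d (u - v) v
    rw [sub_add_cancel] at h
    exact h
  -- uniform bound on norms
  set Sp : ℝ := ∑' k, P k with hSp
  set Sb : ℝ := ∑' k, Bs k with hSb
  have hSb0 : 0 ≤ Sb := tsum_nonneg hB0
  have hM : ∀ n, F.N d (y n) ≤
      (F.N d x + ∑ k ∈ Finset.range (n+1), Bs k) * ∏ k ∈ Finset.range (n+1), (1 + P k) := by
    intro n
    induction n with
    | zero =>
      have h1 : F.N d (y 0) ≤ F.N d (y 0 - x) + F.N d x := htri _ _
      have h2 := hstep0
      simp only [zero_add, Finset.sum_range_one, Finset.prod_range_one]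
      have hx0 := F.n_nonneg d x
      nlinarith [hP0 0, hB0 0]
    | succ n ih =>
      have h1 : F.N d (y (n+1)) ≤ F.N d (y (n+1) - y n) + F.N d (y n) := htri _ _
      have h2 := hstep n
      have h3 : F.N d (y (n+1)) ≤ (1 + P (n+1)) * F.N d (y n) + Bs (n+1) := by nlinarith
      have hyn := F.n_nonneg d (y n)
      have hprod1 : (1:ℝ) ≤ ∏ k ∈ Finset.range (n+1), (1 + P k) := by
        calc (1:ℝ) = ∏ _k ∈ Finset.range (n+1), (1:ℝ) := by simp
          _ ≤ ∏ k ∈ Finset.range (n+1), (1 + P k) :=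
            Finset.prod_le_prod (fun k _ => zero_le_one) (fun k _ => by linarith [hP0 k])
      have hA0 : 0 ≤ F.N d x + ∑ k ∈ Finset.range (n+1), Bs k :=
        add_nonneg (F.n_nonneg d x) (Finset.sum_nonneg fun k _ => hB0 k)
    
      rw [Finset.sum_range_succ, Finset.prod_range_succ]
      have h4 : (1 + P (n+1)) * F.N d (y n) + Bs (n+1)
          ≤ (1 + P (n+1)) * ((F.N d x + ∑ k ∈ Finset.range (n+1), Bs k) *
              ∏ k ∈ Finset.range (n+1), (1 + P k)) + Bs (n+1) := by
        have : (0:ℝ) ≤ 1 + P (n+1) := by linarith [hP0 (n+1)]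
        nlinarith [mul_le_mul_of_nonneg_left ih this]
      refine h3.trans (h4.trans ?_)
      have h5 : (1:ℝ) ≤ (∏ k ∈ Finset.range (n+1), (1 + P k)) * (1 + P (n+1)) := by
        nlinarith [hprod1, hP0 (n+1)]
      nlinarith [mul_nonneg (hB0 (n+1)) (sub_nonneg.mpr h5)]
  set C : ℝ := (F.N d x + Sb) * Real.exp Sp with hC
  have hCbound : ∀ n, F.N d (y n) ≤ C := by
    intro n
    refine (hM n).trans ?_
    have h1 : ∑ k ∈ Finset.range (n+1), Bs k ≤ Sb :=
      Summable.sum_le_tsum _ (fun k _ => hB0 k) hb'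
    have h2 : ∏ k ∈ Finset.range (n+1), (1 + P k) ≤ Real.exp Sp := by
      calc ∏ k ∈ Finset.range (n+1), (1 + P k)
          ≤ ∏ k ∈ Finset.range (n+1), Real.exp (P k) := by
            apply Finset.prod_le_prod
            · intro k _; linarith [hP0 k]
            · intro k _
              have := Real.add_one_le_exp (P k)
              linarith
        _ = Real.exp (∑ k ∈ Finset.range (n+1), P k) := (Real.exp_sum _ _).symm
        _ ≤ Real.exp Sp := Real.exp_le_exp.mpr (Summable.sum_le_tsum _ (fun k _ => hP0 k) hW')
    have hA0 : 0 ≤ F.N d x + ∑ k ∈ Finset.range (n+1), Bs k :=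
      add_nonneg (F.n_nonneg d x) (Finset.sum_nonneg fun k _ => hB0 k)
    have hprod0 : (0:ℝ) ≤ ∏ k ∈ Finset.range (n+1), (1 + P k) :=
      Finset.prod_nonneg fun k _ => by linarith [hP0 k]
    apply mul_le_mul (by linarith) h2 hprod0 (by linarith [F.n_nonneg d x, hSb0])
  have hC0 : 0 ≤ C := le_trans (F.n_nonneg d (y 0)) (hCbound 0)
  -- norm comparison with sup norm
  set c0 : ℝ := ∑ j : Fin d, (F.N d (Pi.single j 1))⁻¹ with hc0def
  have hc00 : 0 ≤ c0 := Finset.sum_nonneg fun j _ => inv_nonneg.mpr (F.n_nonneg _ _)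
  have hnorm : ∀ v : Fin d → ℝ, ‖v‖ ≤ c0 * F.N d v := by
    intro v
    apply pi_norm_le_iff_of_nonneg (mul_nonneg hc00 (F.n_nonneg d v)) |>.mpr
    intro i
    rw [Real.norm_eq_abs]
    calc |v i| ≤ (F.N d (Pi.single i 1))⁻¹ * F.N d v := F.abs_le_inv_mul d v i
      _ ≤ c0 * F.N d v := by
        apply mul_le_mul_of_nonneg_right ?_ (F.n_nonneg d v)
        exact Finset.single_le_sum (f := fun j => (F.N d (Pi.single j 1))⁻¹)
          (fun j _ => inv_nonneg.mpr (F.n_nonneg _ _)) (Finset.mem_univ i)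
  -- summability of distances and conclusion
  have hdist : ∀ n, dist (y n) (y (n+1)) ≤ c0 * (P (n+1) * C + Bs (n+1)) := by
    intro n
    rw [dist_eq_norm]
    calc ‖y n - y (n+1)‖ ≤ c0 * F.N d (y n - y (n+1)) := hnorm _
      _ = c0 * F.N d (y (n+1) - y n) := by rw [← F.n_neg d, neg_sub]
      _ ≤ c0 * (P (n+1) * C + Bs (n+1)) := by
        apply mul_le_mul_of_nonneg_left ?_ hc00
        refine (hstep n).trans ?_
        have := mul_le_mul_of_nonneg_left (hCbound n) (hP0 (n+1))
        linarith
  have hsummable : Summable fun n => dist (y n) (y (n+1)) := by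
    apply Summable.of_nonneg_of_le (fun n => dist_nonneg) hdist
    apply Summable.mul_left
    exact (((summable_nat_add_iff 1).mpr hW').mul_right C).add
      ((summable_nat_add_iff 1).mpr hb')
  have hcauchy : CauchySeq y := cauchySeq_of_summable_dist hsummable
  obtain ⟨a, ha⟩ := cauchySeq_tendsto_of_complete hcauchy
  exact ⟨a, ha⟩

end
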